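/- (Maximin information cannot increase under quantization) Let $f : \mathbb{X} \to \hat{\mathbb{X}}$ be a map into a finite type and set $\hat{X} = f \circ X$, so that $\llbracket S\mid\hat{x}\rrbracket = \bigcup_{x \in \llbracket X\rrbracket,\ f(x)=\hat{x}} \llbracket S\mid x\rrbracket$ for $\hat{x} \in \llbracket\hat{X}\rrbracket$. Then the number of connected components of the confusability graph $G_{\hat{X}}$ (on vertex set $\llbracket\hat{X}\rrbracket$, with edges between distinct $\hat{x},\hat{x}'$ iff $\llbracket S\mid\hat{x}\rrbracket \cap \llbracket S\mid\hat{x}'\rrbracket \neq \emptyset$) is at most the number of connected components of $G_X$; equivalently, $I_*(S;\hat{X}) \leq I_*(S;X)$. -/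
import Mathlib


/-- The conditional range `⟦S∣x⟧ = {S(ω) : ω ∈ Ω, X(ω) = x}`. -/
def condRange {Ω 𝕊 𝕏 : Type*} (S : Ω → 𝕊) (X : Ω → 𝕏) (x : 𝕏) : Set 𝕊 :=
  {s | ∃ ω, X ω = x ∧ S ω = s}

/-- Adjacency in the confusability graph. -/
def ConfAdj {Ω 𝕊 𝕏 : Type*} (S : Ω → 𝕊) (X : Ω → 𝕏) (x x' : 𝕏) : Prop :=
  x ≠ x' ∧ x ∈ Set.range X ∧ x' ∈ Set.range X ∧
    (condRange S X x ∩ condRange S X x').Nonempty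

/-- Connectivity (same connected component) in the confusability graph. -/
def ConfConn {Ω 𝕊 𝕏 : Type*} (S : Ω → 𝕊) (X : Ω → 𝕏) (x x' : 𝕏) : Prop :=
  x ∈ Set.range X ∧ x' ∈ Set.range X ∧ Relation.ReflTransGen (ConfAdj S X) x x'

/-- The set of connected components of the confusability graph. -/
def confComponents {Ω 𝕊 𝕏 : Type*} (S : Ω → 𝕊) (X : Ω → 𝕏) : Set (Set 𝕏) :=
  {C | ∃ x ∈ Set.range X, C = {x' | ConfConn S X x x'}}

lemma condRange_subset_comp {Ω 𝕊 𝕏 𝕏h : Type*} (S : Ω → 𝕊) (X : Ω → 𝕏) (f : 𝕏 → 𝕏h)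
    (x : 𝕏) : condRange S X x ⊆ condRange S (f ∘ X) (f x) := by
  rintro s ⟨ω, hω, hs⟩
  exact ⟨ω, by simp [hω], hs⟩

lemma confAdj_map {Ω 𝕊 𝕏 𝕏h : Type*} (S : Ω → 𝕊) (X : Ω → 𝕏) (f : 𝕏 → 𝕏h)
    {x x' : 𝕏} (h : ConfAdj S X x x') :
    Relation.ReflTransGen (ConfAdj S (f ∘ X)) (f x) (f x') := by
  obtain ⟨hne, ⟨ω, hω⟩, ⟨ω', hω'⟩, s, hs, hs'⟩ := h
  by_cases hfe : f x = f x'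
  · rw [hfe]
  · exact Relation.ReflTransGen.single
      ⟨hfe, ⟨ω, by simp [hω]⟩, ⟨ω', by simp [hω']⟩,
        s, condRange_subset_comp S X f x hs, condRange_subset_comp S X f x' hs'⟩

lemma confRTG_map {Ω 𝕊 𝕏 𝕏h : Type*} (S : Ω → 𝕊) (X : Ω → 𝕏) (f : 𝕏 → 𝕏h)
    {x x' : 𝕏} (hr : Relation.ReflTransGen (ConfAdj S X) x x') :
    Relation.ReflTransGen (ConfAdj S (f ∘ X)) (f x) (f x') := by
  induction hr with
  | refl => exact Relation.ReflTransGen.refl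
  | tail _ hadj ih => exact ih.trans (confAdj_map S X f hadj)

lemma confConn_map {Ω 𝕊 𝕏 𝕏h : Type*} (S : Ω → 𝕊) (X : Ω → 𝕏) (f : 𝕏 → 𝕏h)
    {x x' : 𝕏} (h : ConfConn S X x x') : ConfConn S (f ∘ X) (f x) (f x') := by
  obtain ⟨⟨ω, hω⟩, ⟨ω', hω'⟩, hr⟩ := h
  exact ⟨⟨ω, by simp [hω]⟩, ⟨ω', by simp [hω']⟩, confRTG_map S X f hr⟩

lemma confConn_trans {Ω 𝕊 𝕏 : Type*} {S : Ω → 𝕊} {X : Ω → 𝕏} {a b c : 𝕏}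
    (h1 : ConfConn S X a b) (h2 : ConfConn S X b c) : ConfConn S X a c :=
  ⟨h1.1, h2.2.1, h1.2.2.trans h2.2.2⟩

theorem maximin_quantization_monotone {Ω 𝕊 𝕏 𝕏h : Type*} [Nonempty Ω] [Fintype 𝕊]
    [Fintype 𝕏] [Fintype 𝕏h] (S : Ω → 𝕊) (X : Ω → 𝕏) (f : 𝕏 → 𝕏h) :
    (∀ xh ∈ Set.range (f ∘ X),
      condRange S (f ∘ X) xh = ⋃ x ∈ {x ∈ Set.range X | f x = xh}, condRange S X x)
    ∧ (confComponents S (f ∘ X)).ncard ≤ (confComponents S X).ncard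
    ∧ Real.logb 2 (((confComponents S (f ∘ X)).ncard : ℝ))
        ≤ Real.logb 2 (((confComponents S X).ncard : ℝ)) := by
  have part1 : ∀ xh ∈ Set.range (f ∘ X),
      condRange S (f ∘ X) xh = ⋃ x ∈ {x ∈ Set.range X | f x = xh}, condRange S X x := by
    intro xh _
    ext s
    simp only [condRange, Set.mem_iUnion, Set.mem_setOf_eq, Set.mem_sep_iff,
      Function.comp_apply, exists_prop]
    constructor
    · rintro ⟨ω, hω, hs⟩
      exact ⟨X ω, ⟨⟨ω, rfl⟩, hω⟩, ω, rfl, hs⟩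
    · rintro ⟨x, ⟨_, hfx⟩, ω, hω, hs⟩
      exact ⟨ω, by rw [hω, hfx], hs⟩
  -- surjection argument
  set g : Set 𝕏 → Set 𝕏h := fun C => {y | ∃ x ∈ C, ConfConn S (f ∘ X) (f x) y} with hg
  have hsub : confComponents S (f ∘ X) ⊆ g '' (confComponents S X) := by
    rintro D ⟨xh, ⟨ω, hω⟩, rfl⟩
    refine ⟨{x' | ConfConn S X (X ω) x'}, ⟨X ω, ⟨ω, rfl⟩, rfl⟩, ?_⟩
    ext y
    simp only [hg, Set.mem_setOf_eq]
    constructor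
    · rintro ⟨x, hx, hconn⟩
      have := confConn_map S X f hx
      rw [← hω]
      exact confConn_trans this hconn
    · intro hconn
      refine ⟨X ω, ⟨⟨ω, rfl⟩, ⟨ω, rfl⟩, Relation.ReflTransGen.refl⟩, ?_⟩
      have hω2 : f (X ω) = xh := hω
      rw [hω2]; exact hconn
  have h2 : (confComponents S (f ∘ X)).ncard ≤ (confComponents S X).ncard := by
    calc (confComponents S (f ∘ X)).ncard ≤ (g '' (confComponents S X)).ncard :=
          Set.ncard_le_ncard hsub (Set.toFinite _)
      _ ≤ (confComponents S X).ncard := Set.ncard_image_le (Set.toFinite _)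
  refine ⟨part1, h2, ?_⟩
  have hpos : 0 < (confComponents S (f ∘ X)).ncard := by
    rw [Set.ncard_pos (Set.toFinite _)]
    obtain ⟨ω⟩ := ‹Nonempty Ω›
    exact ⟨_, (f ∘ X) ω, ⟨ω, rfl⟩, rfl⟩
  exact Real.logb_le_logb_of_le (by norm_num) (by exact_mod_cast hpos) (Nat.cast_le.mpr h2)
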